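/- For α ≠ 1/12, the holomorphic map G : ℂ⁴ → ℂ⁴ defined by G(z) = (c z₁, (z₂+z₁z₃+αz₁³)/c, √2(z₃+z₁²/4), 4z₄−2z₁z₂−2z₃²−z₁²z₃−(α/2)z₁⁴) with c = |(3/2)(α−1/12)|^{1/4} satisfies, for all z ∈ ℂ⁴: Re(G₄(z)) − G₁(z)·conj(G₂(z)) − G₂(z)·conj(G₁(z)) − |G₃(z)|² − ε|G₁(z)|⁴ = 4(Re z₄ − Re z₁ · Re z₂ − (Re z₃)² − (Re z₁)²(Re z₃) − α(Re z₁)⁴), where ε = 1 if α > 1/12 and ε = −1 if α < 1/12. -/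

import Mathlib

open Complex

/-- For `α ≠ 1/12`, the map `G` transforms the tube over
`x₄ = x₁x₂+x₃²+x₁²x₃+αx₁⁴` into the domain bounded by
`Re z₄ = z₁ conj z₂ + z₂ conj z₁ + |z₃|² ± |z₁|⁴`. -/
theorem map_to_nonumbilic_model_identity (α : ℝ) (hα : α ≠ 1 / 12)
    (z₁ z₂ z₃ z₄ : ℂ) :
    let c : ℝ := ((3 / 2) * |α - 1 / 12|) ^ ((1 : ℝ) / 4)
    let ε : ℝ := if α > 1 / 12 then 1 else -1
    let G₁ := (c : ℂ) * z₁
    let G₂ := (z₂ + z₁ * z₃ + (α : ℂ) * z₁ ^ 3) / (c : ℂ)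
    let G₃ := (Real.sqrt 2 : ℂ) * (z₃ + z₁ ^ 2 / 4)
    let G₄ := 4 * z₄ - 2 * z₁ * z₂ - 2 * z₃ ^ 2 - z₁ ^ 2 * z₃ - ((α : ℂ) / 2) * z₁ ^ 4
    G₄.re - (G₁ * (starRingEnd ℂ) G₂).re - (G₂ * (starRingEnd ℂ) G₁).re
        - ‖G₃‖ ^ 2 - ε * ‖G₁‖ ^ 4 =
      4 * (z₄.re - z₁.re * z₂.re - z₃.re ^ 2 - z₁.re ^ 2 * z₃.re - α * z₁.re ^ 4) := by
  intro c ε G₁ G₂ G₃ G₄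
  have habs : (0:ℝ) < |α - 1/12| := abs_pos.mpr (sub_ne_zero.mpr hα)
  have hb : (0:ℝ) < (3/2) * |α - 1/12| := by positivity
  have hc : (0:ℝ) < c := Real.rpow_pos_of_pos hb _
  have hcne : (c:ℂ) ≠ 0 := by exact_mod_cast Complex.ofReal_ne_zero.mpr hc.ne'
  have hc4 : c ^ 4 = (3/2) * |α - 1/12| := by
    have : c ^ (4:ℕ) = ((3/2) * |α - 1/12|) ^ (((1:ℝ)/4) * 4) := by
      rw [← Real.rpow_natCast c 4, ← Real.rpow_mul hb.le]
      norm_num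
    simpa using this
  have hε : ε * ((3/2) * |α - 1/12|) = (3/2) * (α - 1/12) := by
    unfold ε
    rcases lt_trichotomy α (1/12) with h | h | h
    · rw [if_neg (not_lt.mpr h.le), abs_of_neg (sub_neg.mpr h)]; ring
    · exact absurd h hα
    · rw [if_pos h, abs_of_pos (sub_pos.mpr h)]; ring
  set N : ℂ := z₂ + z₁ * z₃ + (α : ℂ) * z₁ ^ 3 with hN
  have h12 : G₁ * (starRingEnd ℂ) G₂ = z₁ * (starRingEnd ℂ) N := by
    unfold G₁ G₂
    rw [hN]
    simp only [map_div₀, map_mul, map_add, map_pow, Complex.conj_ofReal]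
    field_simp
  have h21 : G₂ * (starRingEnd ℂ) G₁ = N * (starRingEnd ℂ) z₁ := by
    unfold G₁ G₂
    rw [hN]
    simp only [map_div₀, map_mul, map_add, map_pow, Complex.conj_ofReal]
    field_simp
  have h3 : ‖G₃‖ ^ 2 = 2 * Complex.normSq (z₃ + z₁ ^ 2 / 4) := by
    unfold G₃
    rw [Complex.sq_norm, Complex.normSq_mul, Complex.normSq_ofReal]
    congr 1
    exact Real.mul_self_sqrt (by norm_num)
  have h1 : ε * ‖G₁‖ ^ 4 = (3/2) * (α - 1/12) * Complex.normSq z₁ ^ 2 := by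
    unfold G₁
    have e1 : ‖(c:ℂ) * z₁‖ ^ 4 = (Complex.normSq ((c:ℂ) * z₁)) ^ 2 := by
      rw [← Complex.sq_norm]; ring
    rw [e1, Complex.normSq_mul, Complex.normSq_ofReal]
    have e2 : ε * (c * c * Complex.normSq z₁) ^ 2
        = ε * ((3/2) * |α - 1/12|) * Complex.normSq z₁ ^ 2 := by
      rw [← hc4]; ring
    rw [e2, hε]
  rw [h12, h21, h3, h1]
  unfold G₄
  rw [hN]
  simp only [Complex.normSq_apply, Complex.sub_re, Complex.add_re, Complex.mul_re,
    Complex.mul_im, Complex.add_im, Complex.sub_im, Complex.ofReal_re, Complex.ofReal_im,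
    Complex.div_re, Complex.div_im, Complex.conj_re, Complex.conj_im,
    Complex.re_ofNat, Complex.im_ofNat, pow_succ, pow_zero, one_mul, Complex.one_re,
    Complex.one_im]
  norm_num
  ring
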